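/- Let $\sigma_1, \sigma_2, \sigma_3$ be positive integers with $\sigma_3 \geq 2$, and let $x_1, x_2, x_3 \in \frac{1}{N}\mathbb{Z}/\mathbb{Z}$. Then the twisted Mordell–Tornheim sum $\sum_{n_1, n_2 \geq 1} \frac{e^{2\pi i (n_1 x_1 + n_2 x_2 - (n_1+n_2) x_3)}}{n_1^{\sigma_1} n_2^{\sigma_2} (n_1+n_2)^{\sigma_3}}$ is a finite $\mathbb{Z}$-linear combination of values $\mathrm{Li}_{s, r+\sigma_3}(z_1, z_2)$ of double polylogarithms at $N$-th roots of unity $z_1 = e^{2\pi i(x_1 - x_2)}$, $z_2 = e^{2\pi i (x_2 - x_3)}$, with $r + s = \sigma_1 + \sigma_2$, $r,s \geq 1$; explicitly it equals $\sum_{r+s=\sigma_1+\sigma_2} \binom{\sigma_1-1}{r-1} \mathrm{Li}_{s, r+\sigma_3}(z_1, z_2) + \binom{\sigma_2-1}{r-1} \mathrm{Li}_{s, r+\sigma_3}(z_1^{-1}, z_1 z_2)$. -/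

import Mathlib

/-- The double polylogarithm `Li_{a,b}(w₁, w₂) = ∑_{0 < m < n} w₁^m w₂^n / (m^a n^b)`,
parametrized by `m = p.1`, `n = p.1 + p.2`. -/
noncomputable def doublePolylog (a b : ℕ) (w₁ w₂ : ℂ) : ℂ :=
  ∑' p : ℕ+ × ℕ+,
    w₁ ^ ((p.1 : ℕ)) * w₂ ^ ((p.1 : ℕ) + (p.2 : ℕ)) /
      ((((p.1 : ℕ)) : ℂ) ^ a * ((((p.1 : ℕ) + (p.2 : ℕ) : ℕ)) : ℂ) ^ b)


section AuxLemmas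

open Finset

lemma eis_aux (x y : ℂ) (hx : x ≠ 0) (hy : y ≠ 0) (hxy : x + y ≠ 0) :
    ∀ q : ℕ, 1/(x * y^(q+1)) =
      1/(x*(x+y)^(q+1)) + ∑ i ∈ Finset.range (q+1), 1/(y^(q+1-i) * (x+y)^(i+1)) := by
  have hyp : ∀ n : ℕ, y ^ n ≠ 0 := fun n => pow_ne_zero n hy
  have hxyp : ∀ n : ℕ, (x+y) ^ n ≠ 0 := fun n => pow_ne_zero n hxy
  intro q
  induction q with
  | zero =>
    rw [Finset.sum_range_one]
    rw [div_add_div _ _ (mul_ne_zero hx (hxyp 1)) (mul_ne_zero (hyp (1-0)) (hxyp 1)),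
      div_eq_div_iff (mul_ne_zero hx (hyp 1))
        (mul_ne_zero (mul_ne_zero hx (hxyp 1)) (mul_ne_zero (hyp (1-0)) (hxyp 1)))]
    ring
  | succ q ih =>
    have key : 1/(x * y^(q+2)) =
        1/(y^(q+2)*(x+y)) + (1/(x*y^(q+1))) * (1/(x+y)) := by
      rw [div_mul_div_comm, one_mul,
        div_add_div _ _ (mul_ne_zero (hyp (q+2)) hxy)
          (mul_ne_zero (mul_ne_zero hx (hyp (q+1))) hxy),
        div_eq_div_iff (mul_ne_zero hx (hyp (q+2)))
          (mul_ne_zero (mul_ne_zero (hyp (q+2)) hxy)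
            (mul_ne_zero (mul_ne_zero hx (hyp (q+1))) hxy))]
      ring
    rw [key, ih, add_mul, Finset.sum_mul]
    rw [Finset.sum_range_succ' (fun i => 1/(y^(q+2-i) * (x+y)^(i+1))) (q+1)]
    have h1 : 1/(x*(x+y)^(q+1)) * (1/(x+y)) = 1/(x*(x+y)^(q+2)) := by
      rw [div_mul_div_comm, one_mul]
      congr 1
      ring
    have h2 : ∀ i ∈ Finset.range (q+1),
        1/(y^(q+1-i) * (x+y)^(i+1)) * (1/(x+y)) = 1/(y^(q+2-(i+1)) * (x+y)^(i+1+1)) := by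
      intro i hi
      have he : q+2-(i+1) = q+1-i := by omega
      rw [he, div_mul_div_comm, one_mul]
      congr 1
      ring
    rw [Finset.sum_congr rfl h2, h1]
    simp only [Nat.sub_zero]
    ring

lemma eis_zero (x y : ℂ) (hx : x ≠ 0) (hy : y ≠ 0) (hxy : x + y ≠ 0) (q : ℕ) :
    1/(x^(0+1) * y^(q+1)) = ∑ i ∈ Finset.range (0+q+1),
      ((Nat.choose i q : ℂ)/(x^(0+q+1-i)*(x+y)^(i+1)) +
       (Nat.choose i 0 : ℂ)/(y^(0+q+1-i)*(x+y)^(i+1))) := by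
  simp only [Nat.zero_add, Nat.choose_zero_right, Nat.cast_one, pow_one]
  rw [Finset.sum_add_distrib, eis_aux x y hx hy hxy q]
  congr 1
  · rw [Finset.sum_eq_single q]
    · simp [Nat.sub_self]
    · intro i hi hne
      rw [Nat.choose_eq_zero_of_lt (by simp at hi; omega)]
      simp
    · intro h
      simp at h

lemma eis_helper (a b c d X Y Z W : ℂ) (hX : X ≠ 0) (hY : Y ≠ 0) (hZ : Z ≠ 0) (hW : W ≠ 0) :
    (a/(X*W) + b/(Y*W) + (c/(X*W) + d/(Y*W))) * (1/Z) = (a+c)/(X*(W*Z)) + (b+d)/(Y*(W*Z)) := by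
  field_simp
  ring

lemma eis (x y : ℂ) (hx : x ≠ 0) (hy : y ≠ 0) (hxy : x + y ≠ 0) :
    ∀ p q : ℕ, 1/(x^(p+1) * y^(q+1)) = ∑ i ∈ Finset.range (p+q+1),
      ((Nat.choose i q : ℂ)/(x^(p+q+1-i)*(x+y)^(i+1)) +
       (Nat.choose i p : ℂ)/(y^(p+q+1-i)*(x+y)^(i+1))) := by
  have hxp : ∀ n : ℕ, x ^ n ≠ 0 := fun n => pow_ne_zero n hx
  have hyp : ∀ n : ℕ, y ^ n ≠ 0 := fun n => pow_ne_zero n hy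
  have hxyp : ∀ n : ℕ, (x+y) ^ n ≠ 0 := fun n => pow_ne_zero n hxy
  intro p
  induction p with
  | zero => exact eis_zero x y hx hy hxy
  | succ p ihp =>
    intro q
    induction q with
    | zero =>
      have h := eis_zero y x hy hx (by rwa [add_comm]) (p+1)
      rw [add_comm y x, mul_comm (y^(0+1)) (x^(p+1+1))] at h
      rw [h]
      simp only [Nat.zero_add, Nat.add_zero]
      exact Finset.sum_congr rfl (fun i _ => add_comm _ _)
    | succ q ihq =>
      have key : 1/(x^(p+1+1) * y^(q+1+1)) =
          (1/(x^(p+1)*y^(q+1+1)) + 1/(x^(p+1+1)*y^(q+1))) * (1/(x+y)) := by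
        rw [div_add_div _ _ (mul_ne_zero (hxp (p+1)) (hyp (q+1+1))) (mul_ne_zero (hxp (p+1+1)) (hyp (q+1))),
          div_mul_div_comm,
          div_eq_div_iff (mul_ne_zero (hxp (p+1+1)) (hyp (q+1+1)))
            (mul_ne_zero (mul_ne_zero (mul_ne_zero (hxp (p+1)) (hyp (q+1+1))) (mul_ne_zero (hxp (p+1+1)) (hyp (q+1)))) hxy)]
        ring
      rw [key, ihp (q+1), ihq]
      simp only [show p+(q+1)+1 = p+q+2 from by omega, show p+1+q+1 = p+q+2 from by omega,
        show p+1+(q+1)+1 = p+q+3 from by omega]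
      rw [← Finset.sum_add_distrib, Finset.sum_mul]
      rw [Finset.sum_range_succ' (fun i =>
        ((Nat.choose i (q+1) : ℂ)/(x^(p+q+3-i)*(x+y)^(i+1)) +
         (Nat.choose i (p+1) : ℂ)/(y^(p+q+3-i)*(x+y)^(i+1)))) (p+q+2)]
      have hz : ((Nat.choose 0 (q+1) : ℂ)/(x^(p+q+3-0)*(x+y)^(0+1)) +
         (Nat.choose 0 (p+1) : ℂ)/(y^(p+q+3-0)*(x+y)^(0+1))) = 0 := by
        simp [Nat.choose_eq_zero_of_lt]
      rw [hz, add_zero]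
      apply Finset.sum_congr rfl
      intro i hi
      rw [show p+q+3-(i+1) = p+q+2-i from by omega, Nat.choose_succ_succ i q,
        Nat.choose_succ_succ i p, Nat.cast_add, Nat.cast_add,
        show (x+y)^(i+1+1) = (x+y)^(i+1)*(x+y) from by ring,
        eis_helper _ _ _ _ _ _ _ _ (hxp _) (hyp _) hxy (hxyp _)]
      ring

lemma summable_sq : Summable (fun n : ℕ+ => (((n:ℕ):ℝ)^2)⁻¹) := by
  have h : Summable (fun n : ℕ => (((n:ℕ):ℝ)^2)⁻¹) := by
    simpa [one_div] using Real.summable_one_div_nat_pow.mpr (le_refl 2)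
  exact h.comp_injective PNat.coe_injective

lemma base_summable :
    Summable (fun p : ℕ+ × ℕ+ => (((p.1:ℕ):ℝ)^2)⁻¹ * (((p.2:ℕ):ℝ)^2)⁻¹) :=
  summable_sq.mul_of_nonneg summable_sq (fun _ => by positivity) (fun _ => by positivity)

lemma summable_shape (s b : ℕ) (hs : 1 ≤ s) (hb : 3 ≤ b) (w₁ w₂ : ℂ)
    (h1 : ‖w₁‖ = 1) (h2 : ‖w₂‖ = 1) :
    Summable (fun p : ℕ+ × ℕ+ => w₁ ^ ((p.1 : ℕ)) * w₂ ^ ((p.1 : ℕ) + (p.2 : ℕ)) /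
      ((((p.1 : ℕ)) : ℂ) ^ s * ((((p.1 : ℕ) + (p.2 : ℕ) : ℕ)) : ℂ) ^ b)) := by
  apply Summable.of_norm_bounded base_summable
  rintro ⟨m, k⟩
  have hM : (1:ℝ) ≤ ((m:ℕ):ℝ) := by exact_mod_cast m.one_le
  have hK : (1:ℝ) ≤ ((k:ℕ):ℝ) := by exact_mod_cast k.one_le
  set M := ((m:ℕ):ℝ)
  set K := ((k:ℕ):ℝ)
  have hnorm : ‖w₁ ^ ((m:ℕ)) * w₂ ^ ((m:ℕ) + (k:ℕ)) /
      ((((m:ℕ)) : ℂ) ^ s * ((((m:ℕ) + (k:ℕ) : ℕ)) : ℂ) ^ b)‖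
      = (M ^ s * (M + K) ^ b)⁻¹ := by
    simp only [norm_div, norm_mul, norm_pow, h1, h2, one_pow, one_mul,
      Complex.norm_natCast, one_div]
    push_cast
    ring_nf
    rfl
  rw [hnorm]
  rw [← mul_inv]
  apply inv_anti₀
  · positivity
  · have hMs' : M ≤ M ^ s := le_self_pow₀ (by linarith) (by omega)
    have h3 : M * K ^ 2 ≤ (M + K) ^ 3 := by
      have h4 : K ^ 2 ≤ (M + K) ^ 2 := by nlinarith
      calc M * K ^ 2 ≤ (M + K) * (M + K) ^ 2 :=
            mul_le_mul (by linarith) h4 (by positivity) (by linarith)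
        _ = (M + K) ^ 3 := by ring
    have hb3 : (M + K) ^ 3 ≤ (M + K) ^ b := pow_le_pow_right₀ (by linarith) hb
    calc M ^ 2 * K ^ 2 = M * (M * K ^ 2) := by ring
      _ ≤ M ^ s * ((M + K) ^ 3) := by
          apply mul_le_mul hMs' (by linarith) (by positivity) (by positivity)
      _ ≤ M ^ s * (M + K) ^ b := by
          exact mul_le_mul_of_nonneg_left hb3 (by positivity)

lemma inv_pow_identity (z₁ z₂ : ℂ) (hz : z₁ ≠ 0) (a c : ℕ) :
    (z₁⁻¹) ^ a * (z₁ * z₂) ^ (a + c) = z₁ ^ c * z₂ ^ (a + c) := by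
  rw [mul_pow, inv_pow, pow_add z₁ a c, ← mul_assoc, ← mul_assoc,
    inv_mul_cancel₀ (pow_ne_zero a hz), one_mul]

lemma helper2 (Z C C' X Y W : ℂ) (i t : ℕ) (hX : X ≠ 0) (hY : Y ≠ 0) (hW : W ≠ 0) :
    (Z / W^(t+2)) * (C/(X*W^(i+1)) + C'/(Y*W^(i+1))) =
      C * (Z/(X*W^(i+t+3))) + C' * (Z/(Y*W^(i+t+3))) := by
  rw [show i+t+3 = (i+1)+(t+2) from by omega, pow_add]
  have hW2 : W^(t+2) ≠ 0 := pow_ne_zero _ hW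
  have hWi : W^(i+1) ≠ 0 := pow_ne_zero _ hW
  field_simp
  ring

end AuxLemmas

/-- Theorem 4.2 for the trivalent tree with one internal vertex: for torsion points
`x₁, x₂, x₃ ∈ (1/N)ℤ/ℤ`, the twisted Mordell–Tornheim sum
`∑_{n₁,n₂ ≥ 1} e^{2πi(n₁x₁+n₂x₂-(n₁+n₂)x₃)} / (n₁^σ₁ n₂^σ₂ (n₁+n₂)^σ₃)` is the
`ℤ`-linear combination of double polylogarithms at `N`-th roots of unity
`z₁ = e^{2πi(x₁-x₂)}`, `z₂ = e^{2πi(x₂-x₃)}` given by Eisenstein's trick: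
`∑_{r+s=σ₁+σ₂} C(r-1,σ₂-1) Li_{s,r+σ₃}(z₁, z₂) + C(r-1,σ₁-1) Li_{s,r+σ₃}(z₁⁻¹, z₁z₂)`. -/
theorem twisted_mordellTornheim_eq_polylog_comb (N : ℕ) (hN : 1 ≤ N)
    (σ₁ σ₂ σ₃ : ℕ) (h1 : 1 ≤ σ₁) (h2 : 1 ≤ σ₂) (h3 : 2 ≤ σ₃)
    (x₁ x₂ x₃ : ℝ)
    (hx₁ : ∃ a : ℤ, x₁ = (a : ℝ) / N) (hx₂ : ∃ a : ℤ, x₂ = (a : ℝ) / N)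
    (hx₃ : ∃ a : ℤ, x₃ = (a : ℝ) / N) :
    (∑' n : ℕ+ × ℕ+,
        Complex.exp (2 * Real.pi * Complex.I *
            (((n.1 : ℕ) : ℂ) * (x₁ : ℂ) + ((n.2 : ℕ) : ℂ) * (x₂ : ℂ) -
              (((n.1 : ℕ) : ℂ) + ((n.2 : ℕ) : ℂ)) * (x₃ : ℂ))) /
          (((n.1 : ℕ) : ℂ) ^ σ₁ * ((n.2 : ℕ) : ℂ) ^ σ₂ *
            (((n.1 : ℕ) : ℂ) + ((n.2 : ℕ) : ℂ)) ^ σ₃)) =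
      ∑ r ∈ Finset.Icc 1 (σ₁ + σ₂ - 1),
        ((Nat.choose (r - 1) (σ₂ - 1) : ℂ) *
            doublePolylog (σ₁ + σ₂ - r) (r + σ₃)
              (Complex.exp (2 * Real.pi * Complex.I * ((x₁ : ℂ) - (x₂ : ℂ))))
              (Complex.exp (2 * Real.pi * Complex.I * ((x₂ : ℂ) - (x₃ : ℂ)))) +
          (Nat.choose (r - 1) (σ₁ - 1) : ℂ) *
            doublePolylog (σ₁ + σ₂ - r) (r + σ₃)
              (Complex.exp (2 * Real.pi * Complex.I * ((x₁ : ℂ) - (x₂ : ℂ))))⁻¹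
              (Complex.exp (2 * Real.pi * Complex.I * ((x₁ : ℂ) - (x₂ : ℂ))) *
                Complex.exp (2 * Real.pi * Complex.I * ((x₂ : ℂ) - (x₃ : ℂ))))) := by
  obtain ⟨p, rfl⟩ : ∃ p, σ₁ = p + 1 := ⟨σ₁ - 1, by omega⟩
  obtain ⟨q, rfl⟩ : ∃ q, σ₂ = q + 1 := ⟨σ₂ - 1, by omega⟩
  obtain ⟨t, rfl⟩ : ∃ t, σ₃ = t + 2 := ⟨σ₃ - 2, by omega⟩
  set z₁ := Complex.exp (2 * Real.pi * Complex.I * ((x₁ : ℂ) - (x₂ : ℂ))) with hz₁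
  set z₂ := Complex.exp (2 * Real.pi * Complex.I * ((x₂ : ℂ) - (x₃ : ℂ))) with hz₂
  have hz₁0 : z₁ ≠ 0 := Complex.exp_ne_zero _
  have habs : ∀ a b : ℝ,
      ‖Complex.exp (2 * Real.pi * Complex.I * ((a : ℂ) - (b : ℂ)))‖ = 1 := by
    intro a b
    rw [show (2 * (Real.pi : ℂ) * Complex.I * ((a : ℂ) - (b : ℂ)))
        = ((2 * Real.pi * (a - b) : ℝ) : ℂ) * Complex.I from by push_cast; ring,
      Complex.norm_exp_ofReal_mul_I]
  have habs₁ : ‖z₁‖ = 1 := habs x₁ x₂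
  have habs₂ : ‖z₂‖ = 1 := habs x₂ x₃
  have habs₁' : ‖z₁⁻¹‖ = 1 := by rw [norm_inv, habs₁]; norm_num
  have habs₁₂ : ‖z₁ * z₂‖ = 1 := by rw [norm_mul, habs₁, habs₂]; norm_num
  have SF : ∀ i ∈ Finset.range (p+q+1), Summable (fun n : ℕ+ × ℕ+ =>
      (Nat.choose i q : ℂ) * (z₁ ^ ((n.1 : ℕ)) * z₂ ^ ((n.1 : ℕ) + (n.2 : ℕ)) /
        ((((n.1 : ℕ)) : ℂ) ^ (p+q+1-i) * ((((n.1 : ℕ) + (n.2 : ℕ) : ℕ)) : ℂ) ^ (i+t+3)))) := by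
    intro i hi
    simp only [Finset.mem_range] at hi
    exact (summable_shape (p+q+1-i) (i+t+3) (by omega) (by omega) z₁ z₂ habs₁ habs₂).mul_left _
  have SG : ∀ i ∈ Finset.range (p+q+1), Summable (fun n : ℕ+ × ℕ+ =>
      (Nat.choose i p : ℂ) * (z₁ ^ ((n.1 : ℕ)) * z₂ ^ ((n.1 : ℕ) + (n.2 : ℕ)) /
        ((((n.2 : ℕ)) : ℂ) ^ (p+q+1-i) * ((((n.1 : ℕ) + (n.2 : ℕ) : ℕ)) : ℂ) ^ (i+t+3)))) := by
    intro i hi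
    simp only [Finset.mem_range] at hi
    apply Summable.mul_left
    rw [← (Equiv.prodComm ℕ+ ℕ+).summable_iff]
    apply Summable.congr
      (summable_shape (p+q+1-i) (i+t+3) (by omega) (by omega) z₁⁻¹ (z₁*z₂) habs₁' habs₁₂)
    rintro ⟨a, c⟩
    simp only [Function.comp_apply, Equiv.prodComm_apply, Prod.swap_prod_mk]
    rw [Nat.add_comm ((c : ℕ)) ((a : ℕ)), inv_pow_identity z₁ z₂ hz₁0]
  have hpt : ∀ m k : ℕ+,
      Complex.exp (2 * Real.pi * Complex.I *
          (((m : ℕ) : ℂ) * (x₁ : ℂ) + ((k : ℕ) : ℂ) * (x₂ : ℂ) -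
            (((m : ℕ) : ℂ) + ((k : ℕ) : ℂ)) * (x₃ : ℂ))) /
        (((m : ℕ) : ℂ) ^ (p+1) * ((k : ℕ) : ℂ) ^ (q+1) *
          (((m : ℕ) : ℂ) + ((k : ℕ) : ℂ)) ^ (t+2))
      = ∑ i ∈ Finset.range (p+q+1),
          ((Nat.choose i q : ℂ) * (z₁ ^ ((m : ℕ)) * z₂ ^ ((m : ℕ) + (k : ℕ)) /
            ((((m : ℕ)) : ℂ) ^ (p+q+1-i) * ((((m : ℕ) + (k : ℕ) : ℕ)) : ℂ) ^ (i+t+3))) +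
           (Nat.choose i p : ℂ) * (z₁ ^ ((m : ℕ)) * z₂ ^ ((m : ℕ) + (k : ℕ)) /
            ((((k : ℕ)) : ℂ) ^ (p+q+1-i) * ((((m : ℕ) + (k : ℕ) : ℕ)) : ℂ) ^ (i+t+3)))) := by
    intro m k
    have hm : ((m : ℕ) : ℂ) ≠ 0 := Nat.cast_ne_zero.mpr m.pos.ne'
    have hk : ((k : ℕ) : ℂ) ≠ 0 := Nat.cast_ne_zero.mpr k.pos.ne'
    have hmk : ((m : ℕ) : ℂ) + ((k : ℕ) : ℂ) ≠ 0 := by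
      rw [← Nat.cast_add]
      exact Nat.cast_ne_zero.mpr (Nat.add_pos_left m.pos _).ne'
    have hexp : Complex.exp (2 * Real.pi * Complex.I *
          (((m : ℕ) : ℂ) * (x₁ : ℂ) + ((k : ℕ) : ℂ) * (x₂ : ℂ) -
            (((m : ℕ) : ℂ) + ((k : ℕ) : ℂ)) * (x₃ : ℂ)))
        = z₁ ^ ((m : ℕ)) * z₂ ^ ((m : ℕ) + (k : ℕ)) := by
      rw [hz₁, hz₂, ← Complex.exp_nat_mul, ← Complex.exp_nat_mul, ← Complex.exp_add]
      congr 1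
      push_cast
      ring
    rw [hexp]
    have heis := eis ((m : ℕ) : ℂ) ((k : ℕ) : ℂ) hm hk hmk p q
    calc z₁ ^ ((m : ℕ)) * z₂ ^ ((m : ℕ) + (k : ℕ)) /
          (((m : ℕ) : ℂ) ^ (p+1) * ((k : ℕ) : ℂ) ^ (q+1) *
            (((m : ℕ) : ℂ) + ((k : ℕ) : ℂ)) ^ (t+2))
        = (z₁ ^ ((m : ℕ)) * z₂ ^ ((m : ℕ) + (k : ℕ)) /
            ((((m : ℕ) : ℂ) + ((k : ℕ) : ℂ)) ^ (t+2))) *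
          (1/(((m : ℕ) : ℂ) ^ (p+1) * ((k : ℕ) : ℂ) ^ (q+1))) := by
          rw [div_mul_div_comm, mul_one]
          congr 1
          ring
      _ = _ := by
          rw [heis, Finset.mul_sum]
          apply Finset.sum_congr rfl
          intro i hi
          push_cast
          exact helper2 _ _ _ _ _ _ i t (pow_ne_zero _ hm) (pow_ne_zero _ hk) hmk
  rw [tsum_congr (fun n : ℕ+ × ℕ+ => hpt n.1 n.2),
    Summable.tsum_finsetSum (fun i hi => ((SF i hi).add (SG i hi))),
    show p+1+(q+1)-1 = p+q+1 from by omega,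
    show Finset.Icc 1 (p+q+1) = Finset.Ico 1 (p+q+1+1) from by rw [Finset.Ico_add_one_right_eq_Icc],
    Finset.sum_Ico_eq_sum_range,
    show p+q+1+1-1 = p+q+1 from by omega]
  apply Finset.sum_congr rfl
  intro i hi
  rw [show 1+i-1 = i from by omega, show q+1-1 = q from by omega,
    show p+1-1 = p from by omega,
    show p+1+(q+1)-(1+i) = p+q+1-i from by omega,
    show 1+i+(t+2) = i+t+3 from by omega,
    Summable.tsum_add (SF i hi) (SG i hi)]
  congr 1
  · rw [tsum_mul_left]
    rfl
  · rw [tsum_mul_left]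
    congr 1
    have he := (Equiv.prodComm ℕ+ ℕ+).tsum_eq (fun n : ℕ+ × ℕ+ =>
      z₁ ^ ((n.1 : ℕ)) * z₂ ^ ((n.1 : ℕ) + (n.2 : ℕ)) /
        ((((n.2 : ℕ)) : ℂ) ^ (p+q+1-i) * ((((n.1 : ℕ) + (n.2 : ℕ) : ℕ)) : ℂ) ^ (i+t+3)))
    rw [← he]
    apply tsum_congr
    rintro ⟨a, c⟩
    simp only [Equiv.prodComm_apply, Prod.swap_prod_mk]
    rw [Nat.add_comm ((c : ℕ)) ((a : ℕ)), inv_pow_identity z₁ z₂ hz₁0]
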